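/- Let b_0 > 0, c_0 > 0 and a_0 = −b_0 + c_0/2. Let F : (0,∞) → ℝ be twice continuously differentiable and satisfy the ODE (1/2) c_0 y² F''(y) − ( (a_0 − c_0) y + 1 ) F'(y) = 0 for all y > 0 (equivalently, (1/2) c_0 (d/dy)(y² F'(y)) − (a_0 y + 1) F'(y) = 0), together with the boundary conditions lim_{y→0+} F(y) = 0 and lim_{y→+∞} F(y) = 1. Then for all y > 0: F'(y) = (1/Γ(2b_0/c_0)) (2/c_0)^{2b_0/c_0} y^{−1−2b_0/c_0} exp( −2/(c_0 y) ); equivalently, F'(x) = (1/(Γ(2b_0/c_0) x)) (2/(c_0 x))^{2b_0/c_0} exp( −2/(c_0 x) ), which is the density of the law of I_∞ for Brownian motion with drift X_t = b_0 t + √c_0 W_t. -/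

import Mathlib

open MeasureTheory ProbabilityTheory Filter Set

noncomputable section

/-- Left limit of a path, with the convention `x(u−) = x(0)` for `u ≤ 0`. -/
def llim (x : ℝ → ℝ) (u : ℝ) : ℝ :=
  if u ≤ 0 then x 0 else Function.leftLim x u

/-- A path `x : ℝ → ℝ` is càdlàg (on `[0,∞)`): right-continuous at every `u ≥ 0`,
with left limits at every `u > 0`. -/
def IsCadlag (x : ℝ → ℝ) : Prop :=
  (∀ u : ℝ, 0 ≤ u → ContinuousWithinAt x (Set.Ici u) u) ∧
  (∀ u : ℝ, 0 < u → Tendsto x (nhdsWithin u (Set.Iio u)) (nhds (Function.leftLim x u)))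

/-- The process `X` has independent increments. -/
def IndepIncrements {Ω : Type*} [MeasurableSpace Ω] (P : Measure Ω) (X : ℝ → Ω → ℝ) : Prop :=
  ∀ (n : ℕ) (s : Fin (n + 1) → ℝ), (∀ i, 0 ≤ s i) → Monotone s →
    iIndepFun
      (fun (i : Fin n) ω => X (s i.succ) ω - X (s i.castSucc) ω) P

/-- The time reversed process `Y_s = X_t - X_{(t-s)-}`. -/
def Yrev {Ω : Type*} (X : ℝ → Ω → ℝ) (t s : ℝ) (ω : Ω) : ℝ :=
  X t ω - llim (fun u => X u ω) (t - s)

/-- The process `V_s = e^{-Y_s} ∫_0^s e^{Y_u} du`. -/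
def Vproc {Ω : Type*} (X : ℝ → Ω → ℝ) (t s : ℝ) (ω : Ω) : ℝ :=
  Real.exp (-(Yrev X t s ω)) * ∫ u in (0 : ℝ)..s, Real.exp (Yrev X t u ω)

/-- The exponential functional `I_s = ∫_0^s e^{-X_u} du`. -/
def Ifun {Ω : Type*} (X : ℝ → Ω → ℝ) (s : ℝ) (ω : Ω) : ℝ :=
  ∫ u in (0 : ℝ)..s, Real.exp (-(X u ω))

/-- The class `𝒞` of test functions. -/
def MemC (f : ℝ → ℝ) : Prop :=
  ContDiff ℝ 2 f ∧
  (∃ D : ℝ, ∀ y : ℝ, |f y| ≤ D ∧ |deriv f y| ≤ D ∧ |deriv (deriv f) y| ≤ D) ∧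
  (∃ D : ℝ, ∀ y : ℝ, 0 ≤ y → |deriv f y * y| ≤ D) ∧
  (∃ D : ℝ, ∀ y : ℝ, 0 ≤ y → |deriv (deriv f) y * y ^ 2| ≤ D) ∧
  f 0 = 0 ∧ deriv f 0 = 0

/-- `X` is a PII semimartingale with absolutely continuous characteristics `(b, c, K)`,
satisfying the integrability conditions (2) and (3) of the paper. -/
def HasACCharacteristics {Ω : Type*} [MeasurableSpace Ω] (P : Measure Ω) (X : ℝ → Ω → ℝ)
    (b c : ℝ → ℝ) (K : ℝ → Measure ℝ) : Prop :=
  (∀ u : ℝ, 0 ≤ c u) ∧ (∀ u : ℝ, K u {0} = 0) ∧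
  (∀ t : ℝ, 0 < t → IntegrableOn b (Set.Ioc 0 t) ∧ IntegrableOn c (Set.Ioc 0 t)) ∧
  (∀ r s : ℝ, 0 ≤ r → r ≤ s → ∀ lam : ℝ,
    ∫ ω, Complex.exp (Complex.I * (lam : ℂ) * ((X s ω - X r ω : ℝ) : ℂ)) ∂P =
      Complex.exp (∫ u in r..s,
        (Complex.I * (lam : ℂ) * (b u : ℂ) - (lam : ℂ) ^ 2 * (c u : ℂ) / 2 +
          ∫ x : ℝ, (Complex.exp (Complex.I * (lam : ℂ) * (x : ℂ)) - 1
            - Complex.I * (lam : ℂ) * (x : ℂ)) ∂(K u)))) ∧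
  (∀ t : ℝ, 0 < t →
    (∫⁻ u in Set.Ioc (0 : ℝ) t, ∫⁻ x : ℝ, ENNReal.ofReal (min (x ^ 2) 1) ∂(K u)) < ⊤ ∧
    (∫⁻ u in Set.Ioc (0 : ℝ) t,
      ∫⁻ x in {x : ℝ | 1 < |x|}, ENNReal.ofReal (Real.exp |x|) ∂(K u)) < ⊤)

/-- `ā_s = -b_{t-s} + c_{t-s}/2 + ∫ (e^{-x} - 1 + x) K_{t-s}(dx)`. -/
def abar (b c : ℝ → ℝ) (K : ℝ → Measure ℝ) (t s : ℝ) : ℝ :=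
  -b (t - s) + c (t - s) / 2 + ∫ x : ℝ, (Real.exp (-x) - 1 + x) ∂(K (t - s))

/-- The generator `𝒜_s` of the Markov process `V`. -/
def genA (b c : ℝ → ℝ) (K : ℝ → Measure ℝ) (t s : ℝ) (f : ℝ → ℝ) (y : ℝ) : ℝ :=
  (1 + y * abar b c K t s) * deriv f y + (1 / 2) * c (t - s) * y ^ 2 * deriv (deriv f) y +
    ∫ x : ℝ, (f (y * Real.exp (-x)) - f y - deriv f y * y * (Real.exp (-x) - 1)) ∂(K (t - s))

/-- `X` is a Lévy process with triplet `(b0, c0, K0)`. -/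
def IsLevy {Ω : Type*} [MeasurableSpace Ω] (P : Measure Ω) (X : ℝ → Ω → ℝ)
    (b0 c0 : ℝ) (K0 : Measure ℝ) : Prop :=
  (∀ᵐ ω ∂P, X 0 ω = 0) ∧
  (∀ᵐ ω ∂P, IsCadlag fun s => X s ω) ∧
  (∀ s : ℝ, Measurable (X s)) ∧
  IndepIncrements P X ∧
  (∀ r s : ℝ, 0 ≤ r → r ≤ s →
    P.map (fun ω => X s ω - X r ω) = P.map (X (s - r))) ∧
  (∀ r : ℝ, 0 < r → ∀ᵐ ω ∂P, Function.leftLim (fun u => X u ω) r = X r ω) ∧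
  0 ≤ c0 ∧ K0 {0} = 0 ∧
  (∫⁻ x : ℝ, ENNReal.ofReal (min (x ^ 2) 1) ∂K0) < ⊤ ∧
  (∀ s : ℝ, 0 ≤ s → ∀ lam : ℝ,
    ∫ ω, Complex.exp (Complex.I * (lam : ℂ) * ((X s ω : ℝ) : ℂ)) ∂P =
      Complex.exp ((s : ℂ) * (Complex.I * (lam : ℂ) * (b0 : ℂ) - (lam : ℂ) ^ 2 * (c0 : ℂ) / 2 +
        ∫ x : ℝ, (Complex.exp (Complex.I * (lam : ℂ) * (x : ℂ)) - 1
          - Complex.I * (lam : ℂ) * (x : ℂ)) ∂K0)))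

/-- `a_0 = -b_0 + c_0/2 + ∫ (e^{-x} - 1 + x) K_0(dx)`. -/
def a0 (b0 c0 : ℝ) (K0 : Measure ℝ) : ℝ :=
  -b0 + c0 / 2 + ∫ x : ℝ, (Real.exp (-x) - 1 + x) ∂K0

/-- Condition (2): `∫ (x² ∧ 1) K_0(dx) < ∞`. -/
def LevyCond1 (K0 : Measure ℝ) : Prop :=
  (∫⁻ x : ℝ, ENNReal.ofReal (min (x ^ 2) 1) ∂K0) < ⊤

/-- Condition (3): `∫_{|x|>1} e^{|x|} K_0(dx) < ∞`. -/
def LevyCond2 (K0 : Measure ℝ) : Prop :=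
  (∫⁻ x in {x : ℝ | 1 < |x|}, ENNReal.ofReal (Real.exp |x|) ∂K0) < ⊤

/-- `I_∞ = ∫_0^∞ e^{-X_u} du` (defined via the Lebesgue integral of the
nonnegative integrand). -/
def Iinf {Ω : Type*} (X : ℝ → Ω → ℝ) (ω : Ω) : ℝ :=
  (∫⁻ u in Set.Ioi (0 : ℝ), ENNReal.ofReal (Real.exp (-(X u ω)))).toReal

/-- explicit solution of the stationary equation in the Brownian case
(`a_0 = -b_0 + c_0/2`, no jumps): the density of `I_∞` for Brownian motion with drift. -/
theorem stmt_17 (b0 c0 : ℝ) (hb : 0 < b0) (hc : 0 < c0) (F : ℝ → ℝ)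
    (hF : ContDiffOn ℝ 2 F (Set.Ioi 0))
    (hode : ∀ y : ℝ, 0 < y →
      (1 / 2) * c0 * y ^ 2 * deriv (deriv F) y
        - (((-b0 + c0 / 2) - c0) * y + 1) * deriv F y = 0)
    (h0 : Tendsto F (nhdsWithin 0 (Set.Ioi 0)) (nhds 0))
    (hinf : Tendsto F atTop (nhds 1)) :
    ∀ y : ℝ, 0 < y →
      deriv F y = (1 / Real.Gamma (2 * b0 / c0)) * (2 / c0) ^ (2 * b0 / c0) *
        y ^ (-1 - 2 * b0 / c0) * Real.exp (-2 / (c0 * y)) := by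
  have hα : 0 < 2 * b0 / c0 := by positivity
  set α := 2 * b0 / c0 with hαdef
  set w : ℝ → ℝ := fun z => z ^ (α + 1) * Real.exp (2 / (c0 * z)) with hwdef
  have hwpos : ∀ y : ℝ, 0 < y → 0 < w y := by
    intro y hy
    exact mul_pos (Real.rpow_pos_of_pos hy _) (Real.exp_pos _)
  -- differentiability of F and deriv F on Ioi 0
  have hF1 : ∀ y : ℝ, 0 < y → HasDerivAt F (deriv F y) y := by
    intro y hy
    exact ((hF.differentiableOn (by norm_num)).differentiableAt
      (isOpen_Ioi.mem_nhds hy)).hasDerivAt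
  have hF2 : ∀ y : ℝ, 0 < y → HasDerivAt (deriv F) (deriv (deriv F) y) y := by
    intro y hy
    have hd1 : ContDiffOn ℝ 1 (deriv F) (Set.Ioi 0) :=
      hF.deriv_of_isOpen (m := 1) isOpen_Ioi (by norm_num)
    exact ((hd1.differentiableOn (by norm_num)).differentiableAt
      (isOpen_Ioi.mem_nhds hy)).hasDerivAt
  -- derivative of z ↦ 2/(c0 z)
  have hq : ∀ t : ℝ, t ≠ 0 → HasDerivAt (fun z : ℝ => 2 / (c0 * z)) (-(2 / c0) * (t ^ 2)⁻¹) t := by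
    intro t ht
    have h1 := (hasDerivAt_inv ht).const_mul (2 / c0)
    have he : (fun z : ℝ => 2 / c0 * z⁻¹) = fun z : ℝ => 2 / (c0 * z) := by
      funext z
      rw [div_mul_eq_mul_div, mul_comm c0 z, ← div_div, div_eq_mul_inv 2 z]
    rw [he] at h1
    convert h1 using 1
    · rfl
    · rfl
    ring
  -- the function (deriv F) * w has zero derivative on Ioi 0
  have hH : ∀ y : ℝ, 0 < y → HasDerivAt (fun z => deriv F z * w z) 0 y := by
    intro y hy
    have hy' := hy.ne'
    have hE : HasDerivAt (fun z : ℝ => Real.exp (2 / (c0 * z)))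
        (Real.exp (2 / (c0 * y)) * (-(2 / c0) * (y ^ 2)⁻¹)) y := (hq y hy').exp
    have hP : HasDerivAt (fun z : ℝ => z ^ (α + 1)) ((α + 1) * y ^ α) y := by
      have := Real.hasDerivAt_rpow_const (x := y) (p := α + 1) (Or.inl hy')
      convert this using 2
      ring_nf
    have hw' := hP.mul hE
    have hh := (hF2 y hy).mul hw'
    convert hh using 1
    · rfl
    · rfl
    · rfl
    have hFpp : deriv (deriv F) y
        = 2 * (((-b0 + c0 / 2) - c0) * y + 1) * deriv F y / (c0 * y ^ 2) := by
      field_simp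
      linear_combination 2 * hode y hy
    simp only [Pi.mul_apply]
    rw [hFpp, Real.rpow_add_one hy' α]
    have hA : (0 : ℝ) < y ^ α := Real.rpow_pos_of_pos hy α
    have hE0 : Real.exp (2 / (c0 * y)) ≠ 0 := (Real.exp_pos _).ne'
    field_simp [hαdef]
    have hcα : c0 * α = 2 * b0 := by rw [hαdef]; field_simp
    linear_combination (-(y * deriv F y * y ^ α * Real.exp (2 / (c0 * y)))) * hcα
  -- hence (deriv F) * w is constant on Ioi 0
  have hconst : ∀ a b : ℝ, 0 < a → a ≤ b → deriv F b * w b = deriv F a * w a := by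
    intro a b ha hab
    have hcont : ContinuousOn (fun z => deriv F z * w z) (Set.Icc a b) := by
      intro x hx
      exact (hH x (lt_of_lt_of_le ha hx.1)).continuousAt.continuousWithinAt
    have hder : ∀ x ∈ Set.Ico a b,
        HasDerivWithinAt (fun z => deriv F z * w z) 0 (Set.Ici x) x := by
      intro x hx
      exact (hH x (lt_of_lt_of_le ha hx.1)).hasDerivWithinAt
    exact constant_of_has_deriv_right_zero hcont hder b (Set.right_mem_Icc.2 hab)
  set C : ℝ := deriv F 1 * w 1 with hCdef
  have hCw : ∀ y : ℝ, 0 < y → deriv F y * w y = C := by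
    intro y hy
    rcases le_total y 1 with h | h
    · exact (hconst y 1 hy h).symm ▸ rfl
    · exact hconst 1 y one_pos h
  have hderivF : ∀ y : ℝ, 0 < y → deriv F y = C / w y := by
    intro y hy
    rw [eq_div_iff (hwpos y hy).ne']
    exact hCw y hy
  set K : ℝ := C / (2 / c0) ^ α with hKdef
  have hB : (0 : ℝ) < (2 / c0) ^ α := Real.rpow_pos_of_pos (by positivity) α
  -- derivative of t ↦ F (2/(c0 t))
  have hG : ∀ t : ℝ, 0 < t → HasDerivAt (fun t => F (2 / (c0 * t)))
      (-(K * (Real.exp (-t) * t ^ (α - 1)))) t := by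
    intro t ht
    have hu : 0 < 2 / (c0 * t) := by positivity
    have h1 := (hF1 _ hu).comp t (hq t ht.ne')
    convert h1 using 1
    · rfl
    · rfl
    · rfl
    rw [hderivF _ hu]
    have h2 : 2 / (c0 * (2 / (c0 * t))) = t := by field_simp
    have h3 : (2 / (c0 * t)) ^ α = (2 / c0) ^ α / t ^ α := by
      rw [div_div 2 c0 t |>.symm, Real.div_rpow (by positivity) ht.le]
    simp only [hwdef]
    rw [h2, Real.rpow_add_one (ne_of_gt hu) α, h3, Real.rpow_sub_one ht.ne', Real.exp_neg,
      hKdef]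
    have hA : (0 : ℝ) < t ^ α := Real.rpow_pos_of_pos ht α
    have hE0 : (0 : ℝ) < Real.exp t := Real.exp_pos t
    field_simp
  -- fundamental theorem of calculus
  have hFTC : ∀ s r : ℝ, 0 < s → s ≤ r →
      (∫ t in s..r, K * (Real.exp (-t) * t ^ (α - 1)))
        = F (2 / (c0 * s)) - F (2 / (c0 * r)) := by
    intro s r hs hsr
    have hder : ∀ t ∈ Set.uIcc s r,
        HasDerivAt (fun t => F (2 / (c0 * t))) (-(K * (Real.exp (-t) * t ^ (α - 1)))) t := by
      intro t ht
      rw [Set.uIcc_of_le hsr] at ht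
      exact hG t (lt_of_lt_of_le hs ht.1)
    have hcont : ContinuousOn (fun t => -(K * (Real.exp (-t) * t ^ (α - 1)))) (Set.uIcc s r) := by
      intro t ht
      rw [Set.uIcc_of_le hsr] at ht
      have ht0 : 0 < t := lt_of_lt_of_le hs ht.1
      exact ((continuousAt_const.mul
        (((Real.continuous_exp.comp continuous_neg).continuousAt).mul
          (Real.continuousAt_rpow_const t (α - 1) (Or.inl ht0.ne')))).neg).continuousWithinAt
    have h := intervalIntegral.integral_eq_sub_of_hasDerivAt hder hcont.intervalIntegrable
    rw [intervalIntegral.integral_neg] at h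
    linarith
  -- limit on the Gamma side
  have hsm : ∀ n : ℕ, MeasurableSet (Set.Ioc (1 / ((n : ℝ) + 1)) ((n : ℝ) + 1)) :=
    fun n => measurableSet_Ioc
  have hmono : Monotone fun n : ℕ => Set.Ioc (1 / ((n : ℝ) + 1)) ((n : ℝ) + 1) := by
    intro n m hnm
    have h1 : (n : ℝ) ≤ m := Nat.cast_le.2 hnm
    apply Set.Ioc_subset_Ioc
    · apply one_div_le_one_div_of_le (by positivity)
      linarith
    · linarith
  have hU : (⋃ n : ℕ, Set.Ioc (1 / ((n : ℝ) + 1)) ((n : ℝ) + 1)) = Set.Ioi 0 := by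
    ext x
    simp only [Set.mem_iUnion, Set.mem_Ioc, Set.mem_Ioi]
    constructor
    · rintro ⟨n, h1, _⟩
      exact lt_trans (by positivity) h1
    · intro hx
      obtain ⟨n, hn⟩ := exists_nat_ge (max x x⁻¹)
      have hx1 : x⁻¹ < (n : ℝ) + 1 :=
        lt_of_le_of_lt ((le_max_right _ _).trans hn) (lt_add_one _)
      refine ⟨n, ?_, ?_⟩
      · rw [div_lt_iff₀ (by positivity)]
        have := mul_lt_mul_of_pos_left hx1 hx
        rwa [mul_inv_cancel₀ hx.ne'] at this
      · have : x ≤ (n : ℝ) := (le_max_left _ _).trans hn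
        linarith
    
  have hGammaLim : Tendsto (fun n : ℕ =>
      K * ∫ t in Set.Ioc (1 / ((n : ℝ) + 1)) ((n : ℝ) + 1), Real.exp (-t) * t ^ (α - 1))
      atTop (nhds (K * Real.Gamma α)) := by
    refine Tendsto.const_mul K ?_
    have hint : IntegrableOn (fun t : ℝ => Real.exp (-t) * t ^ (α - 1))
        (⋃ n : ℕ, Set.Ioc (1 / ((n : ℝ) + 1)) ((n : ℝ) + 1)) := by
      rw [hU]
      exact Real.GammaIntegral_convergent hα
    have h := tendsto_setIntegral_of_monotone hsm hmono hint
    rw [hU] at h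
    rwa [Real.Gamma_eq_integral hα]
  -- limit on the F side
  have h1 : Tendsto (fun n : ℕ => ((n : ℝ) + 1)) atTop atTop :=
    tendsto_atTop_add_const_right atTop 1 tendsto_natCast_atTop_atTop
  have hFlim : Tendsto (fun n : ℕ =>
      F (2 / (c0 * (1 / ((n : ℝ) + 1)))) - F (2 / (c0 * ((n : ℝ) + 1)))) atTop (nhds 1) := by
    have ha : Tendsto (fun n : ℕ => 2 / (c0 * (1 / ((n : ℝ) + 1)))) atTop atTop := by
      have he : (fun n : ℕ => 2 / (c0 * (1 / ((n : ℝ) + 1))))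
          = fun n : ℕ => (2 / c0) * ((n : ℝ) + 1) := by
        funext n
        have : ((n : ℝ) + 1) ≠ 0 := by positivity
        field_simp
      rw [he]
      exact Tendsto.const_mul_atTop (by positivity) h1
    have hb' : Tendsto (fun n : ℕ => 2 / (c0 * ((n : ℝ) + 1)))
        atTop (nhdsWithin 0 (Set.Ioi 0)) := by
      rw [tendsto_nhdsWithin_iff]
      constructor
      · have h2 := (Tendsto.const_mul_atTop hc h1).inv_tendsto_atTop
        have h3 := h2.const_mul (2 : ℝ)
        simpa [div_eq_mul_inv] using h3
      · exact Filter.Eventually.of_forall fun n => Set.mem_Ioi.2 (by positivity)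
    have := (hinf.comp ha).sub (h0.comp hb')
    simpa using this
  have heq : ∀ n : ℕ,
      K * ∫ t in Set.Ioc (1 / ((n : ℝ) + 1)) ((n : ℝ) + 1), Real.exp (-t) * t ^ (α - 1)
        = F (2 / (c0 * (1 / ((n : ℝ) + 1)))) - F (2 / (c0 * ((n : ℝ) + 1))) := by
    intro n
    have hs : (0 : ℝ) < 1 / ((n : ℝ) + 1) := by positivity
    have hsr : 1 / ((n : ℝ) + 1) ≤ (n : ℝ) + 1 := by
      rw [div_le_iff₀ (by positivity)]
      nlinarith [Nat.cast_nonneg (α := ℝ) n]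
    rw [← MeasureTheory.integral_const_mul, ← intervalIntegral.integral_of_le hsr]
    exact hFTC _ _ hs hsr
  have hK : K * Real.Gamma α = 1 := by
    refine tendsto_nhds_unique ?_ hFlim
    exact hGammaLim.congr heq
  have hΓ : 0 < Real.Gamma α := Real.Gamma_pos_of_pos hα
  have hC : C = (2 / c0) ^ α / Real.Gamma α := by
    rw [hKdef] at hK
    field_simp at hK ⊢
    linarith
  -- conclusion
  intro y hy
  rw [hderivF y hy, hC]
  simp only [hwdef]
  rw [show (-1 - α) = -(α + 1) by ring, Real.rpow_neg hy.le, show (-2) / (c0 * y) = -(2 / (c0 * y)) by ring,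
    Real.exp_neg]
  have hP : (0 : ℝ) < y ^ (α + 1) := Real.rpow_pos_of_pos hy _
  have hE : (0 : ℝ) < Real.exp (2 / (c0 * y)) := Real.exp_pos _
  field_simp

end
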